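/- If v is monotone with v(∅) = 0 and values in [0,1], and φ_i(v) = 1 for some player i, then v({i}) = 1 and every other player j ≠ i is a null player (φ_j(v) = 0). -/

import Mathlib

open Finset

noncomputable def shapley {α : Type*} [Fintype α] [DecidableEq α]
    (v : Finset α → ℝ) (i : α) : ℝ :=
  ∑ S ∈ (Finset.univ.erase i).powerset,
    ((Nat.factorial S.card * Nat.factorial (Fintype.card α - S.card - 1) : ℝ) /
      (Nat.factorial (Fintype.card α))) * (v (insert i S) - v S)

lemma weight_pos {α : Type*} [Fintype α] [DecidableEq α] (S : Finset α) :
    (0:ℝ) < ((Nat.factorial S.card * Nat.factorial (Fintype.card α - S.card - 1) : ℝ) /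
      (Nat.factorial (Fintype.card α))) := by
  apply div_pos
  · positivity
  · exact_mod_cast Nat.factorial_pos _

lemma weights_sum {α : Type*} [Fintype α] [DecidableEq α]
    (hcard : 1 ≤ Fintype.card α) (i : α) :
    ∑ S ∈ (Finset.univ.erase i).powerset,
      ((Nat.factorial S.card * Nat.factorial (Fintype.card α - S.card - 1) : ℝ) /
        (Nat.factorial (Fintype.card α))) = 1 := by
  set n := Fintype.card α with hn
  have hce : (Finset.univ.erase i).card = n - 1 := by
    rw [Finset.card_erase_of_mem (Finset.mem_univ i), Finset.card_univ]
  rw [Finset.sum_powerset]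
  have hstep : ∀ j ∈ Finset.range ((Finset.univ.erase i).card + 1),
      ∑ t ∈ Finset.powersetCard j (Finset.univ.erase i),
        ((Nat.factorial t.card * Nat.factorial (n - t.card - 1) : ℝ) /
          (Nat.factorial n)) = ((Nat.factorial (n-1) : ℝ) / Nat.factorial n) := by
    intro j hj
    rw [Finset.mem_range, hce] at hj
    have hjle : j ≤ n - 1 := Nat.lt_succ_iff.mp hj
    have h1 : ∀ t ∈ Finset.powersetCard j (Finset.univ.erase i),
        ((Nat.factorial t.card * Nat.factorial (n - t.card - 1) : ℝ) /
          (Nat.factorial n)) = ((Nat.factorial j * Nat.factorial (n - 1 - j) : ℝ) /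
          (Nat.factorial n)) := by
      intro t ht
      have hc := (Finset.mem_powersetCard.mp ht).2
      have h3 : n - t.card - 1 = n - 1 - j := by omega
      rw [h3, hc]
    rw [Finset.sum_congr rfl h1, Finset.sum_const, Finset.card_powersetCard, hce,
      nsmul_eq_mul]
    have hch : ((n-1).choose j * Nat.factorial j * Nat.factorial (n - 1 - j)) =
        Nat.factorial (n-1) := Nat.choose_mul_factorial_mul_factorial hjle
    have hchR : ((n-1).choose j : ℝ) * (Nat.factorial j) * (Nat.factorial (n-1-j)) =
        (Nat.factorial (n-1) : ℝ) := by exact_mod_cast hch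
    have hnf : (Nat.factorial n : ℝ) ≠ 0 := by exact_mod_cast (Nat.factorial_pos n).ne'
    field_simp
    linear_combination hchR
  rw [Finset.sum_congr rfl hstep, Finset.sum_const, Finset.card_range, hce, nsmul_eq_mul]
  have hfac : (Nat.factorial n : ℝ) = n * Nat.factorial (n - 1) := by
    have : n = (n - 1) + 1 := by omega
    rw [this, Nat.factorial_succ]
    push_cast
    ring_nf
  rw [hfac]
  have h1 : (0:ℝ) < n := by exact_mod_cast hcard
  have h2 : (0:ℝ) < (Nat.factorial (n-1) : ℝ) := by exact_mod_cast Nat.factorial_pos _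
  field_simp
  rw [Nat.sub_add_cancel hcard]

theorem shapley_eq_one {α : Type*} [Fintype α] [DecidableEq α]
    (hcard : 1 ≤ Fintype.card α) (v : Finset α → ℝ)
    (hmono : ∀ S T : Finset α, S ⊆ T → v S ≤ v T)
    (hv0 : v ∅ = 0) (hrange : ∀ S : Finset α, 0 ≤ v S ∧ v S ≤ 1)
    (i : α) (hi : shapley v i = 1) :
    v {i} = 1 ∧ ∀ j : α, j ≠ i → shapley v j = 0 := by
  -- every marginal contribution of i is 1
  set w : Finset α → ℝ := fun S =>
    ((Nat.factorial S.card * Nat.factorial (Fintype.card α - S.card - 1) : ℝ) /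
      (Nat.factorial (Fintype.card α))) with hw
  have hsum : ∑ S ∈ (Finset.univ.erase i).powerset, w S = 1 := weights_sum hcard i
  have hle : ∀ S ∈ (Finset.univ.erase i).powerset,
      w S * (v (insert i S) - v S) ≤ w S := by
    intro S _
    have h1 : v (insert i S) - v S ≤ 1 := by
      have := (hrange (insert i S)).2
      have := (hrange S).1
      linarith
    calc w S * (v (insert i S) - v S) ≤ w S * 1 :=
          mul_le_mul_of_nonneg_left h1 (le_of_lt (weight_pos S))
      _ = w S := mul_one _
  have heq : ∀ S ∈ (Finset.univ.erase i).powerset,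
      w S * (v (insert i S) - v S) = w S := by
    have := (Finset.sum_eq_sum_iff_of_le hle).mp ?_
    · exact this
    · rw [hsum]
      exact hi
  have hmarg : ∀ S ∈ (Finset.univ.erase i).powerset, v (insert i S) - v S = 1 := by
    intro S hS
    have h := heq S hS
    have hwpos := weight_pos (α := α) S
    have : w S * (v (insert i S) - v S) = w S * 1 := by rw [mul_one]; exact h
    exact mul_left_cancel₀ (ne_of_gt hwpos) this
  -- v {i} = 1
  have hvi : v {i} = 1 := by
    have := hmarg ∅ (Finset.mem_powerset.mpr (Finset.empty_subset _))
    simp [hv0] at this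
    simpa using this
  -- v (univ.erase i) = 0
  have hverase : v (Finset.univ.erase i) = 0 := by
    have := hmarg (Finset.univ.erase i) (Finset.mem_powerset.mpr (le_refl _))
    have h1 := (hrange (insert i (Finset.univ.erase i))).2
    have h2 := (hrange (Finset.univ.erase i)).1
    linarith
  -- values: v S = 1 if i ∈ S, v S = 0 if i ∉ S
  have hone : ∀ S : Finset α, i ∈ S → v S = 1 := by
    intro S hiS
    have h1 : v {i} ≤ v S := hmono _ _ (Finset.singleton_subset_iff.mpr hiS)
    have h2 := (hrange S).2
    linarith
  have hzero : ∀ S : Finset α, i ∉ S → v S = 0 := by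
    intro S hiS
    have h1 : v S ≤ v (Finset.univ.erase i) := by
      apply hmono
      intro x hx
      exact Finset.mem_erase.mpr ⟨fun h => hiS (h ▸ hx), Finset.mem_univ x⟩
    have h2 := (hrange S).1
    linarith
  refine ⟨hvi, fun j hj => ?_⟩
  unfold shapley
  apply Finset.sum_eq_zero
  intro S hS
  rw [Finset.mem_powerset] at hS
  by_cases hiS : i ∈ S
  · have h1 : v S = 1 := hone S hiS
    have h2 : v (insert j S) = 1 := hone _ (Finset.mem_insert_of_mem hiS)
    rw [h1, h2]
    ring
  · have h1 : v S = 0 := hzero S hiS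
    have h2 : v (insert j S) = 0 := by
      apply hzero
      intro h
      rcases Finset.mem_insert.mp h with h | h
      · exact hj h.symm
      · exact hiS h
    rw [h1, h2]
    ring
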